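/- For the cycle C_n: if n is odd then P_DP(C_n,m) = (m-1)^n − (m-1) for all m ∈ ℕ; if n is even then P_DP(C_n,m) = (m-1)^n − 1 for all m ≥ 2. -/

import Mathlib

open SimpleGraph

/-- The number of proper `m`-colorings of a graph `G`. -/
noncomputable def numColorings {V : Type} (G : SimpleGraph V) (m : ℕ) : ℕ :=
  Nat.card {c : V → Fin m // ∀ ⦃a b : V⦄, G.Adj a b → c a ≠ c b}

/-- An `m`-fold cover `(L, H)` of a graph `G`. -/
structure DPCover {V : Type} (G : SimpleGraph V) (m : ℕ) where
  X : Type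
  H : SimpleGraph X
  L : V → Set X
  partition : ∀ x : X, ∃! v : V, x ∈ L v
  fold : ∀ v : V, Nat.card (L v) = m
  cliques : ∀ v : V, ∀ x ∈ L v, ∀ y ∈ L v, x ≠ y → H.Adj x y
  cross : ∀ u v : V, ∀ x ∈ L u, ∀ y ∈ L v, H.Adj x y → u = v ∨ G.Adj u v
  matching : ∀ u v : V, G.Adj u v → ∀ x ∈ L u, ∀ y ∈ L v, ∀ z ∈ L v,
      H.Adj x y → H.Adj x z → y = z
  matching' : ∀ u v : V, G.Adj u v → ∀ y ∈ L u, ∀ z ∈ L u, ∀ x ∈ L v,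
      H.Adj y x → H.Adj z x → y = z

/-- A cover is full if for each edge `uv` of `G` the matching between `L u` and `L v`
is a perfect matching. -/
def DPCover.IsFull {V : Type} {G : SimpleGraph V} {m : ℕ} (C : DPCover G m) : Prop :=
  ∀ u v : V, G.Adj u v → ∀ x ∈ C.L u, ∃ y ∈ C.L v, C.H.Adj x y

/-- An `H`-coloring of `G`, viewed as an independent transversal of the lists. -/
def DPCover.IsColoring {V : Type} {G : SimpleGraph V} {m : ℕ} (C : DPCover G m)
    (f : V → C.X) : Prop :=
  (∀ v : V, f v ∈ C.L v) ∧ ∀ u v : V, u ≠ v → ¬ C.H.Adj (f u) (f v)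

/-- `P_DP(G, 𝓗)`, the number of `𝓗`-colorings of `G`. -/
noncomputable def DPCover.count {V : Type} {G : SimpleGraph V} {m : ℕ}
    (C : DPCover G m) : ℕ :=
  Nat.card {f : V → C.X // C.IsColoring f}

/-- The DP color function `P_DP(G, m)`. -/
noncomputable def PDP {V : Type} (G : SimpleGraph V) (m : ℕ) : ℕ :=
  sInf {n : ℕ | ∃ C : DPCover G m, C.count = n}

/-- The DP-chromatic number `χ_DP(G)`. -/
noncomputable def chiDP {V : Type} (G : SimpleGraph V) : ℕ :=
  sInf {m : ℕ | ∀ C : DPCover G m, ∃ f : V → C.X, C.IsColoring f}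

/-- A canonical labeling of an `m`-fold cover. -/
def DPCover.HasCanonicalLabeling {V : Type} {G : SimpleGraph V} {m : ℕ}
    (C : DPCover G m) : Prop :=
  ∃ φ : V × Fin m → C.X, Function.Bijective φ ∧ (∀ v j, φ (v, j) ∈ C.L v) ∧
    ∀ u v : V, G.Adj u v → ∀ j : Fin m, C.H.Adj (φ (u, j)) (φ (v, j))

/-- A graph is 2-connected if it has at least 3 vertices, is connected, and
remains connected after deleting any single vertex. -/
def TwoConnected {V : Type} (G : SimpleGraph V) : Prop :=
  3 ≤ Nat.card V ∧ G.Connected ∧ ∀ v : V, (G.induce ({v}ᶜ : Set V)).Connected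


open Finset

lemma nat_card_sigma {α : Type*} [Fintype α] (T : α → Type*) [∀ a, Finite (T a)] :
    Nat.card (Sigma T) = ∑ a, Nat.card (T a) := by
  haveI : ∀ a, Fintype (T a) := fun a => Fintype.ofFinite _
  simp [Nat.card_eq_fintype_card, Fintype.card_sigma]

/-- number of walks of length `k` in the complete graph on `Fin m` from `a` to `b`. -/
noncomputable def Wc (m k : ℕ) (a b : Fin m) : ℕ :=
  Nat.card {e : Fin (k+1) → Fin m // e 0 = a ∧ e (Fin.last k) = b ∧
    ∀ i : Fin k, e i.castSucc ≠ e i.succ}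

lemma Wc_zero (m : ℕ) (a b : Fin m) : Wc m 0 a b = if a = b then 1 else 0 := by
  unfold Wc
  rcases eq_or_ne a b with rfl | h
  · rw [if_pos rfl]
    rw [Nat.card_eq_one_iff_unique]
    constructor
    · constructor
      rintro ⟨e, he0, hel, -⟩ ⟨f, hf0, hfl, -⟩
      ext i
      have : i = 0 := Fin.fin_one_eq_zero i
      subst this
      simp [he0, hf0]
    · exact ⟨⟨fun _ => a, rfl, rfl, fun i => i.elim0⟩⟩
  · rw [if_neg h]
    rw [Nat.card_eq_zero]
    left
    constructor
    rintro ⟨e, he0, hel, -⟩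
    apply h
    rw [← he0, ← hel, show (Fin.last 0) = 0 from rfl]

lemma Wc_succ (m k : ℕ) (a b : Fin m) :
    Wc m (k+1) a b = ∑ c : Fin m, if c = b then 0 else Wc m k a c := by
  classical
  set Q : (Fin (k+2) → Fin m) → Prop := fun e => e 0 = a ∧ e (Fin.last (k+1)) = b ∧
      ∀ i : Fin (k+1), e i.castSucc ≠ e i.succ with hQ
  have key : ∀ c : Fin m, Nat.card {x : {e : Fin (k+2) → Fin m // Q e} //
      x.1 ((Fin.last k).castSucc) = c} = if c = b then 0 else Wc m k a c := by
    intro c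
    rcases eq_or_ne c b with rfl | hcb
    · rw [if_pos rfl, Nat.card_eq_zero]
      left
      constructor
      rintro ⟨⟨e, he0, hel, hpath⟩, hF⟩
      have h1 := hpath (Fin.last k)
      rw [Fin.succ_last, hel] at h1
      exact h1 hF
    · rw [if_neg hcb]
      unfold Wc
      apply Nat.card_congr
      refine ⟨fun x => ⟨fun i => x.1.1 i.castSucc, ?_, ?_, ?_⟩,
        fun f => ⟨⟨Fin.snoc f.1 b, ?_, ?_, ?_⟩, ?_⟩, ?_, ?_⟩
      · simpa using x.1.2.1
      · exact x.2
      · intro i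
        have := x.1.2.2.2 i.castSucc
        rwa [Fin.succ_castSucc] at this
      · have h0 : ((0 : Fin (k+1)).castSucc) = (0 : Fin (k+2)) := by
          simp
        rw [← h0, Fin.snoc_castSucc]
        exact f.2.1
      · rw [Fin.snoc_last]
      · intro i
        induction i using Fin.lastCases with
        | last =>
          rw [Fin.succ_last, Fin.snoc_last, Fin.snoc_castSucc, f.2.2.1]
          exact hcb
        | cast j =>
          rw [Fin.succ_castSucc, Fin.snoc_castSucc, Fin.snoc_castSucc]
          exact f.2.2.2 j
      · show (Fin.snoc f.1 b : Fin (k+2) → Fin m) ((Fin.last k).castSucc) = c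
        rw [Fin.snoc_castSucc]
        exact f.2.2.1
      · rintro ⟨⟨e, he0, hel, hpath⟩, hF⟩
        apply Subtype.ext
        apply Subtype.ext
        funext i
        induction i using Fin.lastCases with
        | last => simp [Fin.snoc_last, hel]
        | cast j => simp [Fin.snoc_castSucc]
      · rintro ⟨f, hf0, hfl, hfpath⟩
        apply Subtype.ext
        funext i
        simp [Fin.snoc_castSucc]
  have dec : {e : Fin (k+2) → Fin m // Q e} ≃
      Σ c : Fin m, {x : {e : Fin (k+2) → Fin m // Q e} //
        x.1 ((Fin.last k).castSucc) = c} :=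
    (Equiv.sigmaFiberEquiv _).symm
  exact ((Nat.card_congr dec).trans (nat_card_sigma _)).trans
    (Finset.sum_congr rfl fun c _ => key c)

lemma Wc_formula (m k : ℕ) (a b : Fin m) :
    (m : ℤ) * Wc m k a b
      = ((m:ℤ)-1)^k - (-1)^k + (if a = b then (m:ℤ)*(-1)^k else 0) := by
  induction k generalizing b with
  | zero =>
    rw [Wc_zero]
    rcases eq_or_ne a b with rfl | h
    · simp
    · simp [h]
  | succ k ih =>
    rw [Wc_succ]
    push_cast
    have split : ∑ c : Fin m, (if c = b then (0:ℤ) else (m:ℤ) * Wc m k a c)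
        = (∑ c : Fin m, (m:ℤ) * Wc m k a c) - (m:ℤ) * Wc m k a b := by
      rw [eq_sub_iff_add_eq,
        ← Finset.sum_erase_add Finset.univ (fun c => (m:ℤ) * Wc m k a c) (Finset.mem_univ b)]
      congr 1
      rw [← Finset.sum_subset (Finset.erase_subset b Finset.univ)
        (fun x _ hx => by simp [Finset.mem_erase] at hx; simp [hx])]
      apply Finset.sum_congr rfl
      intro c hc
      rw [if_neg (Finset.mem_erase.mp hc).1]
    have tot : ∑ c : Fin m, (m:ℤ) * Wc m k a c = (m:ℤ) * ((m:ℤ)-1)^k := by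
      have : ∀ c : Fin m, (m:ℤ) * Wc m k a c
          = (((m:ℤ)-1)^k - (-1)^k) + (if a = c then (m:ℤ)*(-1)^k else 0) := fun c => ih c
      rw [Finset.sum_congr rfl fun c _ => this c, Finset.sum_add_distrib,
        Finset.sum_const, Finset.sum_ite_eq Finset.univ a (fun _ => (m:ℤ)*(-1)^k)]
      simp only [Finset.mem_univ, if_true, Finset.card_univ, Fintype.card_fin]
      ring
    rw [Finset.mul_sum]
    have : ∀ c : Fin m, (m:ℤ) * (if c = b then (0:ℤ) else (Wc m k a c : ℤ))
        = (if c = b then (0:ℤ) else (m:ℤ) * Wc m k a c) := by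
      intro c; by_cases h : c = b <;> simp [h]
    rw [Finset.sum_congr rfl fun c _ => this c, split, tot, ih b]
    split_ifs <;> ring

noncomputable def cyc (m n : ℕ) [NeZero n] (σ : Fin n → Equiv.Perm (Fin m)) : ℕ :=
  Nat.card {c : Fin n → Fin m // ∀ i : Fin n, σ i (c i) ≠ c (i + 1)}

def piUpTo {m n : ℕ} (σ : Fin n → Equiv.Perm (Fin m)) : ℕ → Equiv.Perm (Fin m)
  | 0 => 1
  | k+1 => (if h : k < n then σ ⟨k, h⟩ else 1) * piUpTo σ k

lemma fin_val_add_one {n : ℕ} [NeZero n] (hn : 2 ≤ n) (i : Fin n) (h : i.val + 1 < n) :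
    (i + 1).val = i.val + 1 := by
  rw [Fin.add_def]
  have h1 : (1 : Fin n).val = 1 := by
    rw [Fin.val_one']
    exact Nat.mod_eq_of_lt (by omega)
  rw [h1]
  exact Nat.mod_eq_of_lt h

lemma fin_last_add_one {n : ℕ} [NeZero n] (hn : 2 ≤ n) (i : Fin n) (h : i.val = n - 1) :
    i + 1 = 0 := by
  apply Fin.ext
  rw [Fin.val_add]
  have h1 : (1 : Fin n).val = 1 := by
    rw [Fin.val_one']
    exact Nat.mod_eq_of_lt (by omega)
  rw [h1, h, Nat.sub_add_cancel (by omega : 1 ≤ n), Nat.mod_self]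
  rfl

lemma cyc_change (m n : ℕ) [NeZero n] (hn : 2 ≤ n) (σ : Fin n → Equiv.Perm (Fin m)) :
    cyc m n σ = cyc m n (fun i => if i.val = n - 1 then piUpTo σ n else 1) := by
  apply Nat.card_congr
  apply Equiv.subtypeEquiv
    (Equiv.piCongrRight fun i => ((piUpTo σ i.val).symm : Equiv (Fin m) (Fin m)))
  intro c
  simp only [Equiv.piCongrRight_apply, Pi.map_apply]
  apply forall_congr'
  intro i
  rcases eq_or_ne i.val (n - 1) with hi | hi
  · rw [if_pos hi, fin_last_add_one hn i hi]
    have hpi : piUpTo σ n = σ i * piUpTo σ (n - 1) := by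
      have h2 : piUpTo σ (n - 1 + 1)
          = (if h : n - 1 < n then σ ⟨n-1, h⟩ else 1) * piUpTo σ (n-1) := rfl
      rw [dif_pos (by omega : n - 1 < n)] at h2
      rw [show n - 1 + 1 = n by omega] at h2
      rw [h2]
      congr 2
      exact (Fin.ext hi.symm : (⟨n-1, by omega⟩ : Fin n) = i)
    have E : piUpTo σ n ((piUpTo σ (i.val)).symm (c i)) = σ i (c i) := by
      rw [hpi]
      have h3 : piUpTo σ (n-1) = piUpTo σ i.val := by rw [hi]
      rw [h3]
      simp
    have E0 : (piUpTo σ ((0 : Fin n)).val).symm (c 0) = c 0 := rfl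
    rw [E0, E]
  · rw [if_neg hi]
    have hlt : i.val + 1 < n := by have := i.isLt; omega
    have hv : (i + 1).val = i.val + 1 := fin_val_add_one hn i hlt
    have hpi : piUpTo σ (i.val + 1) = σ i * piUpTo σ i.val := by
      have h2 : piUpTo σ (i.val + 1)
          = (if h : i.val < n then σ ⟨i.val, h⟩ else 1) * piUpTo σ i.val := rfl
      rw [dif_pos i.isLt] at h2
      rw [h2]
    rw [hv]
    have E1 : ∀ x : Fin m, (1 : Equiv.Perm (Fin m)) x = x := fun _ => rfl
    rw [E1]
    set π := piUpTo σ i.val with hπ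
    constructor
    · intro h hc
      apply h
      have := congrArg (piUpTo σ (i.val + 1)) hc
      rw [hpi] at this
      simpa [Equiv.Perm.mul_apply] using this
    · intro h hc
      apply h
      apply (piUpTo σ (i.val + 1)).injective
      rw [hpi]
      simp only [Equiv.Perm.mul_apply, Equiv.apply_symm_apply]
      exact hc

lemma cyc_twisted (m k : ℕ) (hk : 1 ≤ k) (τ : Equiv.Perm (Fin m)) :
    cyc m (k+1) (fun i => if i.val = k then τ else 1)
      = ∑ p : Fin m × Fin m, if τ p.2 = p.1 then 0 else Wc m k p.1 p.2 := by
  classical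
  have hn2 : 2 ≤ k + 1 := by omega
  have hlp1 : (Fin.last k) + 1 = 0 := fin_last_add_one hn2 _ (by simp)
  have castp1 : ∀ j : Fin k, (j.castSucc) + 1 = j.succ := by
    intro j
    apply Fin.ext
    rw [fin_val_add_one hn2 _ (by simp)]
    simp
  set P : (Fin (k+1) → Fin m) → Prop :=
    fun e => ∀ i : Fin (k+1), (if i.val = k then τ else 1) (e i) ≠ e (i + 1) with hP
  have htrans : ∀ e : Fin (k+1) → Fin m,
      P e ↔ ((∀ j : Fin k, e j.castSucc ≠ e j.succ) ∧ τ (e (Fin.last k)) ≠ e 0) := by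
    intro e
    constructor
    · intro h
      refine ⟨fun j => ?_, ?_⟩
      · have hj := h j.castSucc
        rw [if_neg (by simp [Fin.coe_castSucc]; omega), castp1 j] at hj
        exact hj
      · have hl := h (Fin.last k)
        rw [if_pos (by simp), hlp1] at hl
        exact hl
    · rintro ⟨hp, hl⟩ i
      induction i using Fin.lastCases with
      | last =>
        rw [if_pos (by simp), hlp1]
        exact hl
      | cast j =>
        rw [if_neg (by simp [Fin.coe_castSucc]; omega), castp1 j]
        exact hp j
  have key : ∀ p : Fin m × Fin m,
      Nat.card {x : {e : Fin (k+1) → Fin m // P e} // (x.1 0, x.1 (Fin.last k)) = p}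
        = if τ p.2 = p.1 then 0 else Wc m k p.1 p.2 := by
    intro p
    rcases eq_or_ne (τ p.2) p.1 with hfix | hfix
    · rw [if_pos hfix, Nat.card_eq_zero]
      left
      constructor
      rintro ⟨⟨e, he⟩, hpe⟩
      have h1 := ((htrans e).mp he).2
      rw [Prod.mk.injEq] at hpe
      have h2 : e 0 = p.1 := hpe.1
      have h3 : e (Fin.last k) = p.2 := hpe.2
      rw [h3, h2, hfix] at h1
      exact h1 rfl
    · rw [if_neg hfix]
      unfold Wc
      apply Nat.card_congr
      refine ⟨fun x => ⟨x.1.1, ?_, ?_, ((htrans x.1.1).mp x.1.2).1⟩,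
        fun f => ⟨⟨f.1, (htrans f.1).mpr ⟨f.2.2.2, ?_⟩⟩, ?_⟩, ?_, ?_⟩
      · exact (Prod.mk.injEq _ _ _ _ ▸ x.2).1
      · exact (Prod.mk.injEq _ _ _ _ ▸ x.2).2
      · rw [f.2.2.1, f.2.1]
        exact hfix
      · rw [Prod.mk.injEq]
        exact ⟨f.2.1, f.2.2.1⟩
      · rintro ⟨⟨e, he⟩, hpe⟩
        apply Subtype.ext
        apply Subtype.ext
        rfl
      · rintro ⟨f, hf⟩
        apply Subtype.ext
        rfl
  have dec : {e : Fin (k+1) → Fin m // P e} ≃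
      Σ p : Fin m × Fin m, {x : {e : Fin (k+1) → Fin m // P e} //
        (x.1 0, x.1 (Fin.last k)) = p} :=
    (Equiv.sigmaFiberEquiv _).symm
  exact ((Nat.card_congr dec).trans (nat_card_sigma _)).trans
    (Finset.sum_congr rfl fun p _ => key p)

noncomputable def fixCount {m : ℕ} (τ : Equiv.Perm (Fin m)) : ℕ :=
  (Finset.univ.filter fun b => τ b = b).card

lemma fixCount_le {m : ℕ} (τ : Equiv.Perm (Fin m)) : fixCount τ ≤ m := by
  calc fixCount τ ≤ Finset.univ.card := Finset.card_filter_le _ _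
  _ = m := by simp

lemma cyc_formula (m n : ℕ) [NeZero n] (hn : 3 ≤ n) (σ : Fin n → Equiv.Perm (Fin m)) :
    (cyc m n σ : ℤ) = ((m:ℤ)-1)^n + (-1)^n * ((fixCount (piUpTo σ n) : ℤ) - 1) := by
  classical
  rcases Nat.eq_zero_or_pos m with rfl | hm
  · have h1 : cyc 0 n σ = 0 := by
      unfold cyc
      haveI : IsEmpty (Fin n → Fin 0) := ⟨fun f => (f ⟨0, by omega⟩).elim0⟩
      exact Nat.card_of_isEmpty
    have h2 : fixCount (piUpTo σ n) = 0 := by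
      unfold fixCount
      simp
    rw [h1, h2]
    push_cast
    ring
  obtain ⟨k, rfl⟩ : ∃ k, n = k + 1 := ⟨n - 1, by omega⟩
  have hk : 1 ≤ k := by omega
  set τ := piUpTo σ (k+1) with hτ
  rw [cyc_change m (k+1) (by omega) σ]
  have hsub : (fun (i : Fin (k+1)) => if i.val = k + 1 - 1 then piUpTo σ (k+1) else 1)
      = (fun (i : Fin (k+1)) => if i.val = k then τ else 1) := by
    funext i
    rw [Nat.add_sub_cancel, hτ]
  rw [hsub, cyc_twisted m k hk τ]
  apply mul_left_cancel₀ (show (m:ℤ) ≠ 0 by exact_mod_cast hm.ne')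
  push_cast
  rw [Finset.mul_sum]
  have step1 : ∀ p : Fin m × Fin m,
      (m:ℤ) * (if τ p.2 = p.1 then (0:ℤ) else (Wc m k p.1 p.2 : ℤ))
      = (if τ p.2 = p.1 then (0:ℤ) else (m:ℤ) * (Wc m k p.1 p.2 : ℤ)) := by
    intro p
    split_ifs <;> ring
  rw [Finset.sum_congr rfl fun p _ => step1 p]
  rw [Fintype.sum_prod_type_right]
  have inner : ∀ b : Fin m,
      (∑ a : Fin m, if τ b = a then (0:ℤ) else (m:ℤ) * (Wc m k a b : ℤ))
      = (m:ℤ) * ((m:ℤ)-1)^k - (((m:ℤ)-1)^k - (-1)^k + (if τ b = b then (m:ℤ)*(-1)^k else 0)) := by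
    intro b
    have split : (∑ a : Fin m, if τ b = a then (0:ℤ) else (m:ℤ) * (Wc m k a b : ℤ))
        = (∑ a : Fin m, (m:ℤ) * (Wc m k a b : ℤ)) - (m:ℤ) * (Wc m k (τ b) b : ℤ) := by
      rw [eq_sub_iff_add_eq,
        ← Finset.sum_erase_add Finset.univ (fun a => (m:ℤ) * (Wc m k a b : ℤ))
          (Finset.mem_univ (τ b))]
      congr 1
      rw [← Finset.sum_subset (Finset.erase_subset (τ b) Finset.univ)
        (fun x _ hx => by simp [Finset.mem_erase] at hx; simp [hx])]
      apply Finset.sum_congr rfl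
      intro a ha
      rw [if_neg (Ne.symm (Finset.mem_erase.mp ha).1)]
    have tot : (∑ a : Fin m, (m:ℤ) * (Wc m k a b : ℤ)) = (m:ℤ) * ((m:ℤ)-1)^k := by
      rw [Finset.sum_congr rfl fun a _ => Wc_formula m k a b, Finset.sum_add_distrib,
        Finset.sum_const, Finset.sum_ite_eq' Finset.univ b (fun _ => (m:ℤ)*(-1)^k)]
      simp only [Finset.mem_univ, if_true, Finset.card_univ, Fintype.card_fin]
      ring
    rw [split, tot, Wc_formula]
  rw [Finset.sum_congr rfl fun b _ => inner b]
  have fix_sum : (∑ b : Fin m, if τ b = b then (m:ℤ)*(-1)^k else 0)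
      = (fixCount τ : ℤ) * ((m:ℤ)*(-1)^k) := by
    rw [Finset.sum_ite, Finset.sum_const, Finset.sum_const_zero, add_zero, nsmul_eq_mul]
    rfl
  have expand : ∑ b : Fin m, ((m:ℤ) * ((m:ℤ)-1)^k
        - (((m:ℤ)-1)^k - (-1)^k + (if τ b = b then (m:ℤ)*(-1)^k else 0)))
      = (m:ℤ) * ((m:ℤ)*((m:ℤ)-1)^k)
        - ((m:ℤ)*(((m:ℤ)-1)^k - (-1)^k) + (fixCount τ : ℤ) * ((m:ℤ)*(-1)^k)) := by
    rw [Finset.sum_sub_distrib, Finset.sum_add_distrib, Finset.sum_const, Finset.sum_const,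
      fix_sum]
    simp only [Finset.card_univ, Fintype.card_fin, nsmul_eq_mul]
  rw [expand]
  push_cast
  ring

lemma piUpTo_twist0 {m n : ℕ} [NeZero n] (τ0 : Equiv.Perm (Fin m)) :
    ∀ k : ℕ, 1 ≤ k → k ≤ n →
      piUpTo (fun i : Fin n => if i = 0 then τ0 else 1) k = τ0 := by
  intro k
  induction k with
  | zero => omega
  | succ k ih =>
    intro _ hkn
    have hexp : piUpTo (fun i : Fin n => if i = 0 then τ0 else 1) (k+1)
        = (if h : k < n then (if (⟨k, h⟩ : Fin n) = 0 then τ0 else 1) else 1) *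
          piUpTo (fun i : Fin n => if i = 0 then τ0 else 1) k := rfl
    rcases Nat.eq_zero_or_pos k with rfl | hk
    · rw [hexp, dif_pos (by omega : 0 < n), if_pos (by apply Fin.ext; simp)]
      show τ0 * 1 = τ0
      exact mul_one τ0
    · rw [hexp, dif_pos (by omega : k < n),
        if_neg (by intro h; have := congrArg Fin.val h; simp at this; omega),
        ih hk (by omega), one_mul]

lemma fin_succ_ne_self {n : ℕ} [NeZero n] (hn : 2 ≤ n) (i : Fin n) : i + 1 ≠ i := by
  intro h
  rcases eq_or_ne i.val (n-1) with hi | hi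
  · rw [fin_last_add_one hn i hi] at h
    have := congrArg Fin.val h
    simp at this
    omega
  · have hv := fin_val_add_one hn i (by have := i.isLt; omega)
    have := congrArg Fin.val h
    rw [hv] at this
    omega

lemma fin_no_two_cycle {n : ℕ} [NeZero n] (hn : 3 ≤ n) (u v : Fin n)
    (h1 : v = u + 1) (h2 : u = v + 1) : False := by
  rcases eq_or_ne u.val (n-1) with hu | hu
  · rw [fin_last_add_one (by omega) u hu] at h1
    subst h1
    rw [show ((0:Fin n) + 1) = ⟨1, by omega⟩ from by
      apply Fin.ext; rw [fin_val_add_one (by omega) 0 (by simp; omega)]; simp] at h2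
    have := congrArg Fin.val h2
    simp at this
    omega
  · have hv1 := fin_val_add_one (by omega) u (by have := u.isLt; omega)
    rcases eq_or_ne v.val (n-1) with hv | hv
    · rw [fin_last_add_one (by omega) v hv] at h2
      subst h2
      have := congrArg Fin.val h1
      rw [hv1] at this
      simp at this
      omega
    · have hv2 := fin_val_add_one (by omega) v (by have := v.isLt; omega)
      have e1 := congrArg Fin.val h1
      have e2 := congrArg Fin.val h2
      rw [hv1] at e1
      rw [hv2] at e2
      omega

lemma cycle_adj_iff {n : ℕ} [NeZero n] (hn : 3 ≤ n) (u v : Fin n) :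
    (SimpleGraph.cycleGraph n).Adj u v ↔ (v = u + 1 ∨ u = v + 1) := by
  rw [SimpleGraph.cycleGraph_adj']
  have h1 : (1 : Fin n).val = 1 := by
    rw [Fin.val_one']
    exact Nat.mod_eq_of_lt (by omega)
  constructor
  · rintro (h | h)
    · right
      have : u - v = 1 := by apply Fin.ext; rw [h, h1]
      rw [sub_eq_iff_eq_add] at this
      rw [this, add_comm]
    · left
      have : v - u = 1 := by apply Fin.ext; rw [h, h1]
      rw [sub_eq_iff_eq_add] at this
      rw [this, add_comm]
  · rintro (h | h)
    · right
      rw [h]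
      have : u + 1 - u = 1 := add_sub_cancel_left u 1
      rw [this, h1]
    · left
      rw [h]
      have : v + 1 - v = 1 := add_sub_cancel_left v 1
      rw [this, h1]

def mkH (m n : ℕ) [NeZero n] (hn : 3 ≤ n) (σ : Fin n → Equiv.Perm (Fin m)) :
    SimpleGraph (Fin n × Fin m) where
  Adj x y := (x.1 = y.1 ∧ x.2 ≠ y.2) ∨ (y.1 = x.1 + 1 ∧ y.2 = σ x.1 x.2)
    ∨ (x.1 = y.1 + 1 ∧ x.2 = σ y.1 y.2)
  symm := by
    constructor
    rintro x y (⟨h1, h2⟩ | h | h)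
    · exact Or.inl ⟨h1.symm, h2.symm⟩
    · exact Or.inr (Or.inr h)
    · exact Or.inr (Or.inl h)
  loopless := by
    constructor
    rintro x (⟨-, h⟩ | ⟨h, -⟩ | ⟨h, -⟩)
    · exact h rfl
    · exact fin_succ_ne_self (by omega) x.1 h.symm
    · exact fin_succ_ne_self (by omega) x.1 h.symm

def mkCover (m n : ℕ) [NeZero n] (hn : 3 ≤ n) (σ : Fin n → Equiv.Perm (Fin m)) :
    DPCover (SimpleGraph.cycleGraph n) m where
  X := Fin n × Fin m
  H := mkH m n hn σ
  L v := {x | x.1 = v}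
  partition x := ⟨x.1, rfl, fun y hy => hy.symm⟩
  fold v := by
    have e : {x : Fin n × Fin m // x.1 = v} ≃ Fin m :=
      ⟨fun x => x.1.2, fun a => ⟨(v, a), rfl⟩,
        fun x => by rcases x with ⟨⟨x1, x2⟩, h⟩; simp at h; subst h; rfl,
        fun a => rfl⟩
    show Nat.card {x : Fin n × Fin m // x.1 = v} = m
    rw [Nat.card_congr e, Nat.card_eq_fintype_card, Fintype.card_fin]
  cliques := by
    rintro v x hx y hy hxy
    have hx' : x.1 = v := hx
    have hy' : y.1 = v := hy
    left
    refine ⟨hx'.trans hy'.symm, fun h2 => hxy ?_⟩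
    exact Prod.ext (hx'.trans hy'.symm) h2
  cross := by
    rintro u v x hx y hy hadj
    have hx' : x.1 = u := hx
    have hy' : y.1 = v := hy
    rcases hadj with (⟨h1, -⟩ | ⟨h1, -⟩ | ⟨h1, -⟩)
    · left
      rw [← hx', ← hy', h1]
    · right
      rw [cycle_adj_iff hn]
      left
      rw [← hy', ← hx']
      exact h1
    · right
      rw [cycle_adj_iff hn]
      right
      rw [← hx', ← hy']
      exact h1
  matching := by
    rintro u v huv x hx y hy z hz hxy hxz
    have hx' : x.1 = u := hx
    have hy' : y.1 = v := hy
    have hz' : z.1 = v := hz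
    have hne : u ≠ v := SimpleGraph.Adj.ne huv
    have key : ∀ w : Fin n × Fin m, w.1 = v → (mkH m n hn σ).Adj x w →
        w.2 = (if v = u + 1 then σ u x.2 else (σ v).symm x.2) := by
      rintro w hw (⟨h1, -⟩ | ⟨h1, h2⟩ | ⟨h1, h2⟩)
      · exact absurd (hx'.symm.trans (h1.trans hw)) hne
      · rw [if_pos (by rw [← hw, ← hx']; exact h1)]
        rw [← hx']
        exact h2
      · have hvu : u = v + 1 := by rw [← hw, ← hx']; exact h1
        rw [if_neg (fun hc => fin_no_two_cycle hn u v hc hvu)]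
        rw [hw] at h2
        rw [h2]
        simp
    exact Prod.ext (hy'.trans hz'.symm) ((key y hy' hxy).trans (key z hz' hxz).symm)
  matching' := by
    rintro u v huv y hy z hz x hx hyx hzx
    have hx' : x.1 = v := hx
    have hy' : y.1 = u := hy
    have hz' : z.1 = u := hz
    have hne : u ≠ v := SimpleGraph.Adj.ne huv
    have key : ∀ w : Fin n × Fin m, w.1 = u → (mkH m n hn σ).Adj w x →
        w.2 = (if v = u + 1 then (σ u).symm x.2 else σ v x.2) := by
      rintro w hw (⟨h1, -⟩ | ⟨h1, h2⟩ | ⟨h1, h2⟩)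
      · exact absurd (hw.symm.trans (h1.trans hx')) hne
      · rw [if_pos (by rw [← hw, ← hx']; exact h1)]
        rw [hw] at h2
        rw [h2]
        simp
      · have hvu : u = v + 1 := by rw [← hw, ← hx']; exact h1
        rw [if_neg (fun hc => fin_no_two_cycle hn u v hc hvu)]
        rw [← hx']
        exact h2
    exact Prod.ext (hy'.trans hz'.symm) ((key y hy' hyx).trans (key z hz' hzx).symm)

lemma mkCover_count (m n : ℕ) [NeZero n] (hn : 3 ≤ n) (σ : Fin n → Equiv.Perm (Fin m)) :
    (mkCover m n hn σ).count = cyc m n σ := by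
  apply Nat.card_congr
  refine ⟨fun f => ⟨fun v => (f.1 v).2, ?_⟩, fun c => ⟨fun v => (v, c.1 v), ?_, ?_⟩, ?_, ?_⟩
  · intro i
    have hmem : ∀ v, (f.1 v).1 = v := f.2.1
    intro hc
    have hne : i ≠ i + 1 := fun h => fin_succ_ne_self (by omega) i h.symm
    apply f.2.2 i (i+1) hne
    right
    left
    constructor
    · rw [hmem, hmem]
    · rw [hmem]
      exact hc.symm
  · intro v
    exact rfl
  · rintro u v huv (⟨h1, -⟩ | ⟨h1, h2⟩ | ⟨h1, h2⟩)
    · exact huv h1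
    · have := c.2 u
      rw [← h1] at this
      exact this h2.symm
    · have := c.2 v
      rw [← h1] at this
      exact this h2.symm
  · rintro ⟨f, hf⟩
    apply Subtype.ext
    funext v
    exact Prod.ext (hf.1 v).symm rfl
  · rintro ⟨c, hc⟩
    rfl

lemma exists_cover (m n : ℕ) [NeZero n] (hn : 3 ≤ n) (τ0 : Equiv.Perm (Fin m)) :
    ∃ C : DPCover (SimpleGraph.cycleGraph n) m,
      (C.count : ℤ) = ((m:ℤ)-1)^n + (-1)^n * ((fixCount τ0 : ℤ) - 1) := by
  refine ⟨mkCover m n hn (fun i => if i = 0 then τ0 else 1), ?_⟩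
  rw [mkCover_count m n hn _, cyc_formula m n hn _,
    piUpTo_twist0 τ0 n (by omega) le_rfl]

lemma extend_to_perm {m : ℕ} (R : Fin m → Fin m → Prop)
    (hfun : ∀ a b b', R a b → R a b' → b = b')
    (hinj : ∀ a a' b, R a b → R a' b → a = a') :
    ∃ σ : Equiv.Perm (Fin m), ∀ a b, R a b → σ a = b := by
  classical
  set p : Fin m → Prop := fun a => ∃ b, R a b with hp
  set g : {a // p a} → Fin m := fun a => Classical.choose a.2 with hgdef
  have hg : ∀ a : {a // p a}, R a.1 (g a) := fun a => Classical.choose_spec a.2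
  set q : Fin m → Prop := fun b => ∃ a : {a // p a}, g a = b with hq
  have he1 : ∃ e : {a // p a} ≃ {b // q b}, ∀ a, (e a).1 = g a := by
    refine ⟨Equiv.ofBijective (fun a => (⟨g a, ⟨a, rfl⟩⟩ : {b // q b})) ⟨?_, ?_⟩,
      fun a => rfl⟩
    · intro a a' h
      have : g a = g a' := congrArg Subtype.val h
      exact Subtype.ext (hinj a.1 a'.1 (g a) (hg a) (this ▸ hg a'))
    · rintro ⟨b, a, rfl⟩
      exact ⟨a, rfl⟩
  obtain ⟨e1, he1⟩ := he1
  have e2 : {a // ¬ p a} ≃ {b // ¬ q b} := by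
    apply Fintype.equivOfCardEq
    rw [Fintype.card_subtype_compl, Fintype.card_subtype_compl,
      Fintype.card_congr e1]
  refine ⟨(Equiv.sumCompl p).symm.trans ((e1.sumCongr e2).trans (Equiv.sumCompl q)), ?_⟩
  intro a b hR
  have ha : p a := ⟨b, hR⟩
  have hstep : (Equiv.sumCompl p).symm a = Sum.inl ⟨a, ha⟩ :=
    Equiv.sumCompl_symm_apply_of_pos ha
  simp only [Equiv.trans_apply, hstep, Equiv.sumCongr_apply, Sum.map_inl,
    Equiv.sumCompl_apply_inl]
  rw [he1 ⟨a, ha⟩]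
  exact hfun a (g ⟨a, ha⟩) b (hg ⟨a, ha⟩) hR

lemma count_ge (m n : ℕ) [NeZero n] (hn : 3 ≤ n) (hm : 1 ≤ m)
    (C : DPCover (SimpleGraph.cycleGraph n) m) :
    ∃ σ : Fin n → Equiv.Perm (Fin m), cyc m n σ ≤ C.count := by
  classical
  have hfin : ∀ v : Fin n, Finite (C.L v) := by
    intro v
    apply Nat.finite_of_card_ne_zero
    rw [C.fold v]
    omega
  have ψ : ∀ v : Fin n, Nonempty (Fin m ≃ C.L v) := by
    intro v
    haveI := hfin v
    haveI : Fintype (C.L v) := Fintype.ofFinite _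
    exact ⟨(Fintype.equivFinOfCardEq (by rw [← Nat.card_eq_fintype_card, C.fold v])).symm⟩
  set Ψ : ∀ v : Fin n, Fin m ≃ C.L v := fun v => (ψ v).some with hΨ
  have hadj : ∀ i : Fin n, (SimpleGraph.cycleGraph n).Adj i (i+1) :=
    fun i => (cycle_adj_iff hn i (i+1)).mpr (Or.inl rfl)
  set R : Fin n → Fin m → Fin m → Prop :=
    fun i a b => C.H.Adj (Ψ i a).1 (Ψ (i+1) b).1 with hR
  have hext : ∀ i : Fin n, ∃ σi : Equiv.Perm (Fin m), ∀ a b, R i a b → σi a = b := by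
    intro i
    apply extend_to_perm
    · intro a b b' h1 h2
      have := C.matching i (i+1) (hadj i) (Ψ i a).1 (Ψ i a).2
        (Ψ (i+1) b).1 (Ψ (i+1) b).2 (Ψ (i+1) b').1 (Ψ (i+1) b').2 h1 h2
      exact (Ψ (i+1)).injective (Subtype.ext this)
    · intro a a' b h1 h2
      have := C.matching' i (i+1) (hadj i) (Ψ i a).1 (Ψ i a).2
        (Ψ i a').1 (Ψ i a').2 (Ψ (i+1) b).1 (Ψ (i+1) b).2 h1 h2
      exact (Ψ i).injective (Subtype.ext this)
  choose σ hσ using hext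
  refine ⟨σ, ?_⟩
  haveI : Finite {f : Fin n → C.X // C.IsColoring f} := by
    apply Finite.of_injective (fun f => (fun v => (⟨f.1 v, f.2.1 v⟩ : C.L v)))
    intro f f' h
    apply Subtype.ext
    funext v
    exact congrArg Subtype.val (congrFun h v)
  have iscol : ∀ c : {c : Fin n → Fin m // ∀ i : Fin n, σ i (c i) ≠ c (i + 1)},
      C.IsColoring (fun v => (Ψ v (c.1 v)).1) := by
    intro c
    refine ⟨fun v => (Ψ v (c.1 v)).2, ?_⟩
    intro u v huv hadj'
    rcases C.cross u v (Ψ u (c.1 u)).1 (Ψ u (c.1 u)).2 (Ψ v (c.1 v)).1 (Ψ v (c.1 v)).2 hadj'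
      with heq | hGadj
    · exact huv heq
    · rcases (cycle_adj_iff hn u v).mp hGadj with h1 | h1
      · rw [h1] at hadj'
        exact c.2 u (hσ u (c.1 u) (c.1 (u+1)) hadj')
      · rw [h1] at hadj'
        exact c.2 v (hσ v (c.1 v) (c.1 (v+1)) (C.H.adj_symm hadj'))
  apply Nat.card_le_card_of_injective
    (fun c => (⟨fun v => (Ψ v (c.1 v)).1, iscol c⟩ : {f : Fin n → C.X // C.IsColoring f}))
  intro c c' h
  apply Subtype.ext
  funext v
  have hval : (Ψ v (c.1 v)).1 = (Ψ v (c'.1 v)).1 := congrFun (congrArg Subtype.val h) v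
  exact (Ψ v).injective (Subtype.ext hval)

lemma fixCount_one (m : ℕ) : fixCount (1 : Equiv.Perm (Fin m)) = m := by
  unfold fixCount
  simp

lemma fixCount_addLeft {m : ℕ} [NeZero m] (hm : 2 ≤ m) :
    fixCount (Equiv.addLeft (1 : Fin m)) = 0 := by
  unfold fixCount
  rw [Finset.card_eq_zero, Finset.filter_eq_empty_iff]
  intro b _
  show ¬ (1 + b = b)
  intro h
  have h' : (1 : Fin m) + b = 0 + b := by rw [zero_add]; exact h
  have h2 : (1 : Fin m) = 0 := add_right_cancel h'
  have := congrArg Fin.val h2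
  rw [Fin.val_one'] at this
  simp at this
  omega


theorem stmt_14 (n : ℕ) (hn : 3 ≤ n) :
    (Odd n → ∀ m : ℕ,
      (PDP (cycleGraph n) m : ℤ) = ((m : ℤ) - 1) ^ n - ((m : ℤ) - 1)) ∧
    (Even n → ∀ m : ℕ, 2 ≤ m →
      (PDP (cycleGraph n) m : ℤ) = ((m : ℤ) - 1) ^ n - 1) := by
  haveI : NeZero n := ⟨by omega⟩
  constructor
  · intro hodd m
    have hneg : ((-1:ℤ))^n = -1 := Odd.neg_one_pow hodd
    obtain ⟨C0, hC0⟩ := exists_cover m n hn 1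
    rw [fixCount_one, hneg] at hC0
    have hupper : PDP (cycleGraph n) m ≤ C0.count := Nat.sInf_le ⟨C0, rfl⟩
    obtain ⟨C1, hC1⟩ : ∃ C : DPCover (cycleGraph n) m, C.count = PDP (cycleGraph n) m :=
      Nat.sInf_mem (⟨C0.count, C0, rfl⟩ :
        {t : ℕ | ∃ C : DPCover (cycleGraph n) m, C.count = t}.Nonempty)
    have hlower : ((m:ℤ)-1)^n - ((m:ℤ)-1) ≤ (PDP (cycleGraph n) m : ℤ) := by
      rcases Nat.eq_zero_or_pos m with rfl | hm
      · simp only [Nat.cast_zero]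
        have hz : ((0:ℤ)-1)^n - ((0:ℤ)-1) = 0 := by
          rw [show ((0:ℤ)-1) = -1 by ring, hneg]
          ring
        rw [hz]
        exact Int.natCast_nonneg _
      · obtain ⟨σ, hσ⟩ := count_ge m n hn hm C1
        have hform := cyc_formula m n hn σ
        rw [hneg] at hform
        have hF : (fixCount (piUpTo σ n) : ℤ) ≤ m := by
          exact_mod_cast fixCount_le (piUpTo σ n)
        have h1 : ((m:ℤ)-1)^n - ((m:ℤ)-1) ≤ (cyc m n σ : ℤ) := by
          rw [hform]
          linarith
        have h2 : (cyc m n σ : ℤ) ≤ (PDP (cycleGraph n) m : ℤ) := by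
          exact_mod_cast hσ.trans hC1.le
        linarith
    have hub : (PDP (cycleGraph n) m : ℤ) ≤ ((m:ℤ)-1)^n - ((m:ℤ)-1) := by
      have : (PDP (cycleGraph n) m : ℤ) ≤ (C0.count : ℤ) := by exact_mod_cast hupper
      rw [hC0] at this
      push_cast at this
      linarith
    linarith
  · intro heven m hm
    haveI : NeZero m := ⟨by omega⟩
    have hneg : ((-1:ℤ))^n = 1 := Even.neg_one_pow heven
    obtain ⟨C0, hC0⟩ := exists_cover m n hn (Equiv.addLeft (1 : Fin m))
    rw [fixCount_addLeft hm, hneg] at hC0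
    have hupper : PDP (cycleGraph n) m ≤ C0.count := Nat.sInf_le ⟨C0, rfl⟩
    obtain ⟨C1, hC1⟩ : ∃ C : DPCover (cycleGraph n) m, C.count = PDP (cycleGraph n) m :=
      Nat.sInf_mem (⟨C0.count, C0, rfl⟩ :
        {t : ℕ | ∃ C : DPCover (cycleGraph n) m, C.count = t}.Nonempty)
    have hlower : ((m:ℤ)-1)^n - 1 ≤ (PDP (cycleGraph n) m : ℤ) := by
      obtain ⟨σ, hσ⟩ := count_ge m n hn (by omega) C1
      have hform := cyc_formula m n hn σ
      rw [hneg] at hform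
      have hF : (0:ℤ) ≤ (fixCount (piUpTo σ n) : ℤ) := Int.natCast_nonneg _
      have h1 : ((m:ℤ)-1)^n - 1 ≤ (cyc m n σ : ℤ) := by
        rw [hform]
        linarith
      have h2 : (cyc m n σ : ℤ) ≤ (PDP (cycleGraph n) m : ℤ) := by
        exact_mod_cast hσ.trans hC1.le
      linarith
    have hub : (PDP (cycleGraph n) m : ℤ) ≤ ((m:ℤ)-1)^n - 1 := by
      have : (PDP (cycleGraph n) m : ℤ) ≤ (C0.count : ℤ) := by exact_mod_cast hupper
      rw [hC0] at this
      push_cast at this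
      linarith
    linarith
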